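/- Let (X, A, Y) be random with A, Y ∈ {0,1}, e(x) = P(A=1 | X=x) ∈ [ē, 1−ē] with ē > 0, and μ(x,a) = E[Y | X=x, A=a]. Let ě : 𝒳 → [ē, 1−ē] and μ̌ : 𝒳 × {0,1} → [0,1] be measurable, and suppose either ě = e or μ̌ = μ. Then for any measurable w : 𝒳 → [−1, 1], |E[w(X)·((A − ě(X))·μ̌(X,0) + (1−A)·Y)/(1 − ě(X))] − E[w(X)·μ(X,0)]| ≤ ē⁻¹·‖e − ě‖₂·‖μ(·,0) − μ̌(·,0)‖₂, where ‖·‖₂ is the L²-norm over the distribution of X. -/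

import Mathlib

open MeasureTheory

lemma integrable_of_bdd' {Ω : Type*} [MeasurableSpace Ω] (μ : Measure Ω)
    [IsFiniteMeasure μ] (f : Ω → ℝ) (hf : Measurable f) (C : ℝ)
    (hC : ∀ ω, |f ω| ≤ C) : Integrable f μ :=
  (integrable_const C).mono' hf.aestronglyMeasurable
    (Filter.Eventually.of_forall fun ω => by simpa using hC ω)

/-- Double robustness bound for the AIPW score for arm 0: if either the
propensity model `ě` or the outcome model `m̌0` is correct, the bias of the
score is controlled by the product of the two `L²` estimation errors. -/
theorem stmt_15 {Ω 𝒳 : Type*} [MeasurableSpace Ω] [MeasurableSpace 𝒳]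
    (μ : Measure Ω) [IsProbabilityMeasure μ]
    (X : Ω → 𝒳) (A Y : Ω → ℝ) (e m0 : 𝒳 → ℝ) (ebar : ℝ) (hebar : 0 < ebar)
    (hX : Measurable X) (hA : Measurable A) (hY : Measurable Y)
    (he : Measurable e) (hm0 : Measurable m0)
    (hAb : ∀ ω, A ω = 0 ∨ A ω = 1) (hYb : ∀ ω, Y ω = 0 ∨ Y ω = 1)
    (heB : ∀ x, ebar ≤ e x ∧ e x ≤ 1 - ebar)
    (hm0B : ∀ x, 0 ≤ m0 x ∧ m0 x ≤ 1)
    (hE : ∀ v : 𝒳 → ℝ, Measurable v → (∃ C, ∀ x, |v x| ≤ C) →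
      ∫ ω, v (X ω) * A ω ∂μ = ∫ ω, v (X ω) * e (X ω) ∂μ)
    (hM0 : ∀ v : 𝒳 → ℝ, Measurable v → (∃ C, ∀ x, |v x| ≤ C) →
      ∫ ω, v (X ω) * (1 - A ω) * Y ω ∂μ
        = ∫ ω, v (X ω) * (1 - e (X ω)) * m0 (X ω) ∂μ)
    (ech m0ch : 𝒳 → ℝ) (hech : Measurable ech) (hm0ch : Measurable m0ch)
    (hechB : ∀ x, ebar ≤ ech x ∧ ech x ≤ 1 - ebar)
    (hm0chB : ∀ x, 0 ≤ m0ch x ∧ m0ch x ≤ 1)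
    (hcorrect : ech = e ∨ m0ch = m0)
    (w : 𝒳 → ℝ) (hw : Measurable w) (hwB : ∀ x, |w x| ≤ 1) :
    |(∫ ω, w (X ω) * ((A ω - ech (X ω)) * m0ch (X ω) + (1 - A ω) * Y ω)
          / (1 - ech (X ω)) ∂μ)
        - ∫ ω, w (X ω) * m0 (X ω) ∂μ| ≤
      ebar⁻¹ * Real.sqrt (∫ ω, (e (X ω) - ech (X ω)) ^ 2 ∂μ)
        * Real.sqrt (∫ ω, (m0 (X ω) - m0ch (X ω)) ^ 2 ∂μ) := by
  have hden : ∀ x, (0:ℝ) < 1 - ech x := fun x => by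
    have := (hechB x).2; linarith
  set g : 𝒳 → ℝ := fun x => w x * m0ch x / (1 - ech x) with hgdef
  set h : 𝒳 → ℝ := fun x => w x / (1 - ech x) with hhdef
  have hgm : Measurable g := (hw.mul hm0ch).div (measurable_const.sub hech)
  have hhm : Measurable h := hw.div (measurable_const.sub hech)
  have hdenB : ∀ x, ebar ≤ |1 - ech x| := fun x => by
    rw [abs_of_pos (hden x)]; have := (hechB x).2; linarith
  have hhB : ∀ x, |h x| ≤ ebar⁻¹ := fun x => by
    rw [hhdef]; simp only [abs_div]
    rw [div_le_iff₀ (lt_of_lt_of_le hebar (hdenB x)), inv_mul_eq_div,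
      le_div_iff₀ hebar]
    calc |w x| * ebar ≤ 1 * ebar := by
          exact mul_le_mul_of_nonneg_right (hwB x) hebar.le
      _ = ebar := one_mul _
      _ ≤ |1 - ech x| := hdenB x
  have hgB : ∀ x, |g x| ≤ ebar⁻¹ := fun x => by
    have : |g x| ≤ |h x| * |m0ch x| := by
      rw [hgdef, hhdef]; simp only [abs_div, abs_mul]
      rw [div_mul_eq_mul_div]
    refine le_trans this ?_
    calc |h x| * |m0ch x| ≤ ebar⁻¹ * 1 := by
          apply mul_le_mul (hhB x) _ (abs_nonneg _) (by positivity)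
          rw [abs_of_nonneg (hm0chB x).1]; exact (hm0chB x).2
      _ = ebar⁻¹ := mul_one _
  -- integrability of the pieces
  have hAB : ∀ ω, |A ω| ≤ 1 := fun ω => by rcases hAb ω with h1 | h1 <;> simp [h1]
  have hYB : ∀ ω, |Y ω| ≤ 1 := fun ω => by rcases hYb ω with h1 | h1 <;> simp [h1]
  have i1 : Integrable (fun ω => g (X ω) * A ω) μ := by
    refine integrable_of_bdd' μ _ (by exact (hgm.comp hX).mul hA) (ebar⁻¹ * 1) ?_
    intro ω; rw [abs_mul]
    exact mul_le_mul (hgB _) (hAB ω) (abs_nonneg _) (by positivity)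
  have i2 : Integrable (fun ω => g (X ω) * ech (X ω)) μ := by
    refine integrable_of_bdd' μ _ (by exact (hgm.comp hX).mul (hech.comp hX)) (ebar⁻¹ * 1) ?_
    intro ω; rw [abs_mul]
    refine mul_le_mul (hgB _) ?_ (abs_nonneg _) (by positivity)
    have := hechB (X ω); have h2 := hden (X ω)
    rw [abs_of_nonneg (by linarith [this.1])]; linarith [this.2]
  have i3 : Integrable (fun ω => h (X ω) * (1 - A ω) * Y ω) μ := by
    refine integrable_of_bdd' μ _ (by exact ((hhm.comp hX).mul (measurable_const.sub hA)).mul hY)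
      (ebar⁻¹ * 1 * 1) ?_
    intro ω; rw [abs_mul, abs_mul]
    refine mul_le_mul (mul_le_mul (hhB _) ?_ (abs_nonneg _) (by positivity))
      (hYB ω) (abs_nonneg _) (by positivity)
    rcases hAb ω with h1 | h1 <;> simp [h1]
  have i4 : Integrable (fun ω => g (X ω) * e (X ω)) μ := by
    refine integrable_of_bdd' μ _ (by exact (hgm.comp hX).mul (he.comp hX)) (ebar⁻¹ * 1) ?_
    intro ω; rw [abs_mul]
    refine mul_le_mul (hgB _) ?_ (abs_nonneg _) (by positivity)
    have := heB (X ω)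
    rw [abs_of_nonneg (by linarith [this.1])]; linarith [this.2]
  have i5 : Integrable (fun ω => h (X ω) * (1 - e (X ω)) * m0 (X ω)) μ := by
    refine integrable_of_bdd' μ _
      (by exact ((hhm.comp hX).mul (measurable_const.sub (he.comp hX))).mul (hm0.comp hX))
      (ebar⁻¹ * 1 * 1) ?_
    intro ω; rw [abs_mul, abs_mul]
    refine mul_le_mul (mul_le_mul (hhB _) ?_ (abs_nonneg _) (by positivity)) ?_
      (abs_nonneg _) (by positivity)
    · have := heB (X ω)
      rw [abs_of_nonneg (by linarith [this.1])]; linarith [this.1]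
    · have := hm0B (X ω); rw [abs_of_nonneg this.1]; exact this.2
  have key : (∫ ω, w (X ω) * ((A ω - ech (X ω)) * m0ch (X ω) + (1 - A ω) * Y ω)
          / (1 - ech (X ω)) ∂μ) = ∫ ω, w (X ω) * m0 (X ω) ∂μ := by
    have step1 : (∫ ω, w (X ω) * ((A ω - ech (X ω)) * m0ch (X ω) + (1 - A ω) * Y ω)
          / (1 - ech (X ω)) ∂μ)
        = ∫ ω, (g (X ω) * A ω - g (X ω) * ech (X ω))
            + h (X ω) * (1 - A ω) * Y ω ∂μ := by
      refine integral_congr_ae (Filter.Eventually.of_forall fun ω => ?_)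
      have hz := (hden (X ω)).ne'
      rw [hgdef, hhdef]
      field_simp
    have i12 : Integrable (fun ω => g (X ω) * A ω - g (X ω) * ech (X ω)) μ := i1.sub i2
    have i42 : Integrable (fun ω => g (X ω) * e (X ω) - g (X ω) * ech (X ω)) μ := i4.sub i2
    rw [step1]
    rw [integral_add i12 i3, integral_sub i1 i2]
    rw [hE g hgm ⟨ebar⁻¹, hgB⟩, hM0 h hhm ⟨ebar⁻¹, hhB⟩]
    rw [← integral_sub i4 i2, ← integral_add i42 i5]
    refine integral_congr_ae (Filter.Eventually.of_forall fun ω => ?_)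
    have hz := (hden (X ω)).ne'
    rcases hcorrect with hc | hc
    · subst hc
      rw [hgdef, hhdef]
      field_simp
      ring
    · subst hc
      rw [hgdef, hhdef]
      field_simp
      ring
  rw [key, sub_self, abs_zero]
  positivity
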